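/- Fix n ≥ 1, ε ∈ (0,1], a probability distribution ν on {0,1}^n, and functions f_1,…,f_t : {0,1}^n → [0,1]. Define the mirror descent iterates μ_0 = U and, for 1 ≤ s ≤ t, μ_s(x) = exp(−(ε/4)·Σ_{i=1}^{s} f_i(x)) / Z_s with Z_s = Σ_{x∈{0,1}^n} exp(−(ε/4)·Σ_{i=1}^{s} f_i(x)). Suppose that for every 1 ≤ i ≤ t, E_{μ_{i−1}}[f_i] − E_ν[f_i] ≥ ε. Then (i) ‖μ_t − ν‖_TV ≤ √(2·(D(ν‖U) − t·ε²/16)), and (ii) in particular t ≤ 16·ε^{−2}·D(ν‖U), so the verification game with mirror descent updates lasts at most 16·ε^{−2}·D(ν‖U) rounds. -/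

import Mathlib

open Finset

noncomputable section

/-- Expectation of `f` under a distribution `μ` on a finite type. -/
def expect {S : Type*} [Fintype S] (μ f : S → ℝ) : ℝ := ∑ x, μ x * f x

/-- Relative entropy (KL divergence, natural logarithm). -/
def klDiv {S : Type*} [Fintype S] (ν μ : S → ℝ) : ℝ := ∑ x, ν x * Real.log (ν x / μ x)

/-- Total variation distance. -/
def tvDist {S : Type*} [Fintype S] (μ ν : S → ℝ) : ℝ := (1 / 2) * ∑ x, |μ x - ν x|

/-- `μ` is a probability distribution on the finite type `S`. -/
def IsProbDist {S : Type*} [Fintype S] (μ : S → ℝ) : Prop :=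
  (∀ x, 0 ≤ μ x) ∧ ∑ x, μ x = 1

/-- The uniform distribution on `{0,1}^n`. -/
def uniformBn (n : ℕ) : (Fin n → Bool) → ℝ := fun _ => ((2 : ℝ) ^ n)⁻¹

/-- The `s`-th mirror descent iterate: the Gibbs distribution
`μ_s(x) = exp(-(ε/4)·∑_{i<s} f_i(x)) / Z_s`.  For `s = 0` this is the uniform
distribution on `{0,1}^n`. -/
def mdIter (n : ℕ) (ε : ℝ) (f : ℕ → (Fin n → Bool) → ℝ) (s : ℕ) :
    (Fin n → Bool) → ℝ :=
  fun x => Real.exp (-(ε / 4) * ∑ i ∈ Finset.range s, f i x) /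
    ∑ y, Real.exp (-(ε / 4) * ∑ i ∈ Finset.range s, f i y)

/-! ### Auxiliary lemmas -/

lemma exp_neg_le_quad {u : ℝ} (hu : 0 ≤ u) : Real.exp (-u) ≤ 1 - u + u ^ 2 := by
  have h1 : 1 + u ≤ Real.exp u := by linarith [Real.add_one_le_exp u]
  have hmul : Real.exp (-u) * Real.exp u = 1 := by
    rw [← Real.exp_add]; simp
  have hpos := Real.exp_pos (-u)
  nlinarith [mul_le_mul_of_nonneg_left h1 hpos.le, sq_nonneg u, hpos.le]

lemma Z_pos (n : ℕ) (ε : ℝ) (f : ℕ → (Fin n → Bool) → ℝ) (s : ℕ) :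
    0 < ∑ y, Real.exp (-(ε / 4) * ∑ i ∈ Finset.range s, f i y) :=
  Finset.sum_pos (fun _ _ => Real.exp_pos _) ⟨fun _ => true, Finset.mem_univ _⟩

lemma mdIter_zero (n : ℕ) (ε : ℝ) (f : ℕ → (Fin n → Bool) → ℝ) :
    mdIter n ε f 0 = uniformBn n := by
  funext x
  simp [mdIter, uniformBn, Finset.card_univ]

lemma mdIter_pos (n : ℕ) (ε : ℝ) (f : ℕ → (Fin n → Bool) → ℝ) (s : ℕ) (x : Fin n → Bool) :
    0 < mdIter n ε f s x :=
  div_pos (Real.exp_pos _) (Z_pos n ε f s)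

lemma mdIter_sum (n : ℕ) (ε : ℝ) (f : ℕ → (Fin n → Bool) → ℝ) (s : ℕ) :
    ∑ x, mdIter n ε f s x = 1 := by
  unfold mdIter
  rw [← Finset.sum_div, div_self (Z_pos n ε f s).ne']

/-- A weak form of Pinsker's inequality: `tv(μ,ν)² ≤ D(ν‖μ)`, together with
nonnegativity of relative entropy.  Proved via the Bhattacharyya coefficient. -/
lemma pinsker_lite {S : Type*} [Fintype S] (μ ν : S → ℝ)
    (hμpos : ∀ x, 0 < μ x) (hμ1 : ∑ x, μ x = 1)
    (hν0 : ∀ x, 0 ≤ ν x) (hν1 : ∑ x, ν x = 1) :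
    0 ≤ klDiv ν μ ∧ tvDist μ ν ^ 2 ≤ klDiv ν μ := by
  set ρ : ℝ := ∑ x, Real.sqrt (ν x * μ x) with hρdef
  have hρ0 : 0 ≤ ρ := Finset.sum_nonneg fun x _ => Real.sqrt_nonneg _
  have hs : ∀ x : S, Real.sqrt (ν x * μ x) ≤ (ν x + μ x) / 2 := by
    intro x
    have h : ν x * μ x ≤ ((ν x + μ x) / 2) ^ 2 := by
      nlinarith [sq_nonneg (ν x - μ x)]
    calc Real.sqrt (ν x * μ x) ≤ Real.sqrt (((ν x + μ x) / 2) ^ 2) := Real.sqrt_le_sqrt h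
      _ = (ν x + μ x) / 2 := Real.sqrt_sq (by linarith [hν0 x, (hμpos x).le])
  have hρ1 : ρ ≤ 1 := by
    calc ρ ≤ ∑ x, (ν x + μ x) / 2 := Finset.sum_le_sum fun x _ => hs x
      _ = 1 := by rw [← Finset.sum_div, Finset.sum_add_distrib, hν1, hμ1]; norm_num
  -- pointwise KL lower bound
  have hpt : ∀ x : S, 2 * (ν x - Real.sqrt (ν x * μ x)) ≤ ν x * Real.log (ν x / μ x) := by
    intro x
    rcases eq_or_lt_of_le (hν0 x) with h0 | hpos
    · simp [← h0]
    · have hμx := hμpos x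
      have hy : 0 < Real.sqrt (μ x / ν x) := Real.sqrt_pos.2 (by positivity)
      have hlog : Real.log (Real.sqrt (μ x / ν x)) ≤ Real.sqrt (μ x / ν x) - 1 :=
        Real.log_le_sub_one_of_pos hy
      have hls : Real.log (Real.sqrt (μ x / ν x)) = Real.log (μ x / ν x) / 2 :=
        Real.log_sqrt (by positivity)
      have hld : Real.log (μ x / ν x) = -Real.log (ν x / μ x) := by
        rw [← Real.log_inv]; congr 1; rw [inv_div]
      have hne : ν x ≠ 0 := hpos.ne'
      have hsq : ν x * Real.sqrt (μ x / ν x) = Real.sqrt (ν x * μ x) := by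
        rw [show ν x * μ x = ν x ^ 2 * (μ x / ν x) by field_simp,
          Real.sqrt_mul (sq_nonneg _), Real.sqrt_sq hpos.le]
      have h2 : 2 - 2 * Real.sqrt (μ x / ν x) ≤ Real.log (ν x / μ x) := by
        rw [hls, hld] at hlog; linarith
      nlinarith [mul_le_mul_of_nonneg_left h2 hpos.le, hsq]
  have hD : 2 - 2 * ρ ≤ klDiv ν μ := by
    have h := Finset.sum_le_sum fun x (_ : x ∈ Finset.univ) => hpt x
    have e : ∑ x, 2 * (ν x - Real.sqrt (ν x * μ x)) = 2 - 2 * ρ := by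
      simp only [mul_sub]
      rw [Finset.sum_sub_distrib, ← Finset.mul_sum, ← Finset.mul_sum, hν1, ← hρdef]
      ring
    rw [e] at h
    exact h
  constructor
  · linarith
  · -- Cauchy-Schwarz part
    have hCS := Finset.sum_mul_sq_le_sq_mul_sq Finset.univ
      (fun x => |Real.sqrt (ν x) - Real.sqrt (μ x)|)
      (fun x => Real.sqrt (ν x) + Real.sqrt (μ x))
    have hFG : ∀ x : S, |Real.sqrt (ν x) - Real.sqrt (μ x)| * (Real.sqrt (ν x) + Real.sqrt (μ x))
        = |μ x - ν x| := by
      intro x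
      have hg0 : 0 ≤ Real.sqrt (ν x) + Real.sqrt (μ x) := by positivity
      rw [← abs_of_nonneg hg0, ← abs_mul]
      rw [show (Real.sqrt (ν x) - Real.sqrt (μ x)) * (Real.sqrt (ν x) + Real.sqrt (μ x))
          = Real.sqrt (ν x) ^ 2 - Real.sqrt (μ x) ^ 2 by ring]
      rw [Real.sq_sqrt (hν0 x), Real.sq_sqrt (hμpos x).le, abs_sub_comm]
    have hF2 : ∑ x, |Real.sqrt (ν x) - Real.sqrt (μ x)| ^ 2 = 2 - 2 * ρ := by
      have : ∀ x : S, |Real.sqrt (ν x) - Real.sqrt (μ x)| ^ 2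
          = ν x + μ x - 2 * Real.sqrt (ν x * μ x) := by
        intro x
        rw [sq_abs, sub_sq, Real.sq_sqrt (hν0 x), Real.sq_sqrt (hμpos x).le,
          Real.sqrt_mul (hν0 x)]
        ring
      rw [Finset.sum_congr rfl fun x _ => this x]
      rw [Finset.sum_sub_distrib, Finset.sum_add_distrib, hν1, hμ1, ← Finset.mul_sum]
      ring
    have hG2 : ∑ x, (Real.sqrt (ν x) + Real.sqrt (μ x)) ^ 2 = 2 + 2 * ρ := by
      have : ∀ x : S, (Real.sqrt (ν x) + Real.sqrt (μ x)) ^ 2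
          = ν x + μ x + 2 * Real.sqrt (ν x * μ x) := by
        intro x
        rw [add_sq, Real.sq_sqrt (hν0 x), Real.sq_sqrt (hμpos x).le, Real.sqrt_mul (hν0 x)]
        ring
      rw [Finset.sum_congr rfl fun x _ => this x]
      rw [Finset.sum_add_distrib, Finset.sum_add_distrib, hν1, hμ1, ← Finset.mul_sum]
      ring
    rw [Finset.sum_congr rfl fun x _ => hFG x, hF2, hG2] at hCS
    have habs : (∑ x, |μ x - ν x|) ^ 2 ≤ 4 * (2 - 2 * ρ) := by
      nlinarith [hCS, hρ1, hρ0]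
    have : tvDist μ ν ^ 2 ≤ 2 - 2 * ρ := by
      unfold tvDist
      nlinarith [habs]
    linarith

/-- One step of the mirror descent argument: the KL divergence to `ν` drops by at
least `ε²/16` in each round. -/
lemma kl_step (n : ℕ) (ε : ℝ) (hε0 : 0 < ε) (hε1 : ε ≤ 1)
    (ν : (Fin n → Bool) → ℝ) (hν : IsProbDist ν)
    (f : ℕ → (Fin n → Bool) → ℝ) (s : ℕ) (hf : ∀ x, f s x ∈ Set.Icc (0 : ℝ) 1)
    (hsep : expect (mdIter n ε f s) (f s) - expect ν (f s) ≥ ε) :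
    klDiv ν (mdIter n ε f (s + 1)) ≤ klDiv ν (mdIter n ε f s) - ε ^ 2 / 16 := by
  classical
  set g : (Fin n → Bool) → ℝ :=
    fun x => Real.exp (-(ε / 4) * ∑ i ∈ Finset.range s, f i x) with hg
  set g' : (Fin n → Bool) → ℝ :=
    fun x => Real.exp (-(ε / 4) * ∑ i ∈ Finset.range (s + 1), f i x) with hg'
  have hg0 : ∀ x, 0 < g x := fun x => Real.exp_pos _
  have hg'0 : ∀ x, 0 < g' x := fun x => Real.exp_pos _
  set Z : ℝ := ∑ y, g y with hZdef
  set Z' : ℝ := ∑ y, g' y with hZ'def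
  have hZ : 0 < Z := Z_pos n ε f s
  have hZ' : 0 < Z' := Z_pos n ε f (s + 1)
  have hms : ∀ x, mdIter n ε f s x = g x / Z := fun x => rfl
  have hms' : ∀ x, mdIter n ε f (s + 1) x = g' x / Z' := fun x => rfl
  set W : ℝ := ∑ x, g x * f s x with hWdef
  have hW0 : 0 ≤ W := Finset.sum_nonneg fun x _ =>
    mul_nonneg (hg0 x).le (hf x).1
  have hWZ : W ≤ Z := Finset.sum_le_sum fun x _ => by
    nlinarith [(hf x).2, hg0 x]
  have hEeq : expect (mdIter n ε f s) (f s) = W / Z := by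
    show (∑ x, mdIter n ε f s x * f s x) = W / Z
    rw [hWdef, Finset.sum_div]
    exact Finset.sum_congr rfl fun x _ => by rw [hms x]; ring
  -- pointwise exponential bound
  have hg'le : ∀ x, g' x ≤ g x * (1 - ε / 4 * f s x + (ε / 4) ^ 2 * f s x) := by
    intro x
    have hgg' : g' x = g x * Real.exp (-(ε / 4 * f s x)) := by
      simp only [hg, hg', ← Real.exp_add]
      congr 1
      rw [Finset.sum_range_succ]
      ring
    have hu : 0 ≤ ε / 4 * f s x := by
      have := (hf x).1; positivity
    have hb : Real.exp (-(ε / 4 * f s x)) ≤ 1 - ε / 4 * f s x + (ε / 4) ^ 2 * f s x := by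
      have h2 := exp_neg_le_quad hu
      have hf2 : f s x ^ 2 ≤ f s x := by nlinarith [(hf x).1, (hf x).2]
      have he : (ε / 4 * f s x) ^ 2 = (ε / 4) ^ 2 * f s x ^ 2 := by ring
      nlinarith [mul_le_mul_of_nonneg_left hf2 (sq_nonneg (ε / 4))]
    rw [hgg']
    exact le_trans (mul_le_mul_of_nonneg_left hb (hg0 x).le) (le_of_eq (by ring))
  have hZ'le : Z' ≤ Z - ε / 4 * W + (ε / 4) ^ 2 * W := by
    calc Z' ≤ ∑ x, (g x - ε / 4 * (g x * f s x) + (ε / 4) ^ 2 * (g x * f s x)) :=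
          Finset.sum_le_sum fun x _ => le_trans (hg'le x) (le_of_eq (by ring))
      _ = Z - ε / 4 * W + (ε / 4) ^ 2 * W := by
          rw [Finset.sum_add_distrib, Finset.sum_sub_distrib, ← Finset.mul_sum,
            ← Finset.mul_sum, hWdef, hZdef]
  -- log bound
  have hB0 : 0 < 1 - ε / 4 * (W / Z) + (ε / 4) ^ 2 := by
    have hWZ' : W / Z ≤ 1 := (div_le_one hZ).2 hWZ
    have hWZ0 : 0 ≤ W / Z := div_nonneg hW0 hZ.le
    nlinarith
  have hlog : Real.log Z' - Real.log Z ≤ -(ε / 4) * (W / Z) + (ε / 4) ^ 2 := by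
    have hZB : Z' ≤ Z * (1 - ε / 4 * (W / Z) + (ε / 4) ^ 2) := by
      have he : Z * (1 - ε / 4 * (W / Z) + (ε / 4) ^ 2) = Z - ε / 4 * W + (ε / 4) ^ 2 * Z := by
        field_simp
      nlinarith [sq_nonneg (ε / 4)]
    have h1 : Real.log Z' ≤ Real.log (Z * (1 - ε / 4 * (W / Z) + (ε / 4) ^ 2)) :=
      Real.log_le_log hZ' hZB
    rw [Real.log_mul hZ.ne' hB0.ne'] at h1
    have h2 := Real.log_le_sub_one_of_pos hB0
    linarith
  -- KL difference identity
  have h1 : klDiv ν (mdIter n ε f (s + 1)) - klDiv ν (mdIter n ε f s)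
      = ∑ x, ν x * (ε / 4 * f s x + (Real.log Z' - Real.log Z)) := by
    unfold klDiv
    rw [← Finset.sum_sub_distrib]
    apply Finset.sum_congr rfl
    intro x _
    rcases eq_or_lt_of_le (hν.1 x) with h0 | hpos
    · simp [← h0]
    · rw [hms x, hms' x,
        Real.log_div hpos.ne' (div_pos (hg'0 x) hZ').ne',
        Real.log_div hpos.ne' (div_pos (hg0 x) hZ).ne',
        Real.log_div (hg'0 x).ne' hZ'.ne', Real.log_div (hg0 x).ne' hZ.ne']
      simp only [hg, hg', Real.log_exp]
      rw [Finset.sum_range_succ]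
      ring
  have h2 : ∑ x, ν x * (ε / 4 * f s x + (Real.log Z' - Real.log Z))
      = ε / 4 * expect ν (f s) + (Real.log Z' - Real.log Z) := by
    have hpt : ∀ x, ν x * (ε / 4 * f s x + (Real.log Z' - Real.log Z))
        = ε / 4 * (ν x * f s x) + (Real.log Z' - Real.log Z) * ν x := fun x => by ring
    rw [Finset.sum_congr rfl fun x _ => hpt x, Finset.sum_add_distrib,
      ← Finset.mul_sum, ← Finset.mul_sum, hν.2]
    show _ = ε / 4 * (∑ x, ν x * f s x) + (Real.log Z' - Real.log Z)
    ring
  have h3 : ε / 4 * expect ν (f s) ≤ ε / 4 * (W / Z) - ε ^ 2 / 4 := by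
    have hs' := hsep
    rw [hEeq] at hs'
    nlinarith
  nlinarith [h1, h2, hlog, h3, sq_nonneg ε]

/-- If each `f i` distinguishes the previous mirror descent iterate from `ν` by `ε`,
then the final iterate is `√(2(D(ν‖U) − tε²/16))`-close to `ν` in total variation,
and in particular the game lasts at most `16 ε⁻² D(ν‖U)` rounds. -/
theorem mirror_descent_tv_and_round_bound (n : ℕ) (hn : 1 ≤ n)
    (ε : ℝ) (hε : ε ∈ Set.Ioc (0 : ℝ) 1)
    (ν : (Fin n → Bool) → ℝ) (hν : IsProbDist ν)
    (t : ℕ) (f : ℕ → (Fin n → Bool) → ℝ)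
    (hf : ∀ i < t, ∀ x, f i x ∈ Set.Icc (0 : ℝ) 1)
    (hsep : ∀ i < t, expect (mdIter n ε f i) (f i) - expect ν (f i) ≥ ε) :
    tvDist (mdIter n ε f t) ν ≤
        Real.sqrt (2 * (klDiv ν (uniformBn n) - t * ε ^ 2 / 16)) ∧
      (t : ℝ) ≤ 16 / ε ^ 2 * klDiv ν (uniformBn n) := by
  obtain ⟨hε0, hε1⟩ := hε
  have main : ∀ s ≤ t,
      klDiv ν (mdIter n ε f s) ≤ klDiv ν (uniformBn n) - s * ε ^ 2 / 16 := by
    intro s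
    induction s with
    | zero => intro _; simp [mdIter_zero]
    | succ k ih =>
      intro hk
      have hk' : k < t := hk
      have h1 := ih (Nat.le_of_lt hk')
      have h2 := kl_step n ε hε0 hε1 ν hν f k (hf k hk') (hsep k hk')
      push_cast
      push_cast at h1
      linarith
  have hmain := main t le_rfl
  obtain ⟨hkl0, htv⟩ :=
    pinsker_lite (mdIter n ε f t) ν (mdIter_pos n ε f t) (mdIter_sum n ε f t) hν.1 hν.2
  have hε2 : 0 < ε ^ 2 := by positivity
  constructor
  · have htv0 : 0 ≤ tvDist (mdIter n ε f t) ν := by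
      unfold tvDist
      have h := Finset.sum_nonneg fun x (_ : x ∈ Finset.univ) =>
        abs_nonneg (mdIter n ε f t x - ν x)
      linarith
    have h4 : tvDist (mdIter n ε f t) ν ^ 2
        ≤ 2 * (klDiv ν (uniformBn n) - t * ε ^ 2 / 16) := by
      nlinarith
    calc tvDist (mdIter n ε f t) ν
        = Real.sqrt (tvDist (mdIter n ε f t) ν ^ 2) := (Real.sqrt_sq htv0).symm
      _ ≤ Real.sqrt (2 * (klDiv ν (uniformBn n) - t * ε ^ 2 / 16)) := Real.sqrt_le_sqrt h4
  · rw [div_mul_eq_mul_div, le_div_iff₀ hε2]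
    nlinarith
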